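/- arXiv:1606.02898 — 2 statements merged into one kernel-verified Lean document; each statement's English description precedes it below -/
import Mathlib

section
/- Let p > 5, γ < 0 and ω > 0. Then n_ω = l_ω, i.e. the infimum of S_{ω,γ} over nonzero H¹(ℝ) functions with P_γ = 0 equals the infimum of S_{ω,0} over nonzero H¹(ℝ) functions with P_0 = 0. -/
open MeasureTheory Real Filter Topology

/-- `φ : ℝ → ℂ` lies in `H¹(ℝ)`: `φ ∈ L²(ℝ)` together with a weak derivative
`dx ∈ L²(ℝ)` such that `φ x = φ 0 + ∫₀ˣ dx (t) dt` for all `x`. -/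
structure H1 where
  toFun : ℝ → ℂ
  dx : ℝ → ℂ
  memL2 : MemLp toFun 2 (volume : Measure ℝ)
  dx_memL2 : MemLp dx 2 (volume : Measure ℝ)
  eq_int : ∀ x : ℝ, toFun x = toFun 0 + ∫ t in (0:ℝ)..x, dx t

/-- `‖∂ₓφ‖²_{L²}` -/
noncomputable def gradSq (φ : H1) : ℝ := ∫ x : ℝ, ‖φ.dx x‖ ^ 2

/-- `‖φ‖²_{L²}` -/
noncomputable def massSq (φ : H1) : ℝ := ∫ x : ℝ, ‖φ.toFun x‖ ^ 2

/-- `‖φ‖^{p+1}_{L^{p+1}}` -/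
noncomputable def lpPow (p : ℝ) (φ : H1) : ℝ := ∫ x : ℝ, ‖φ.toFun x‖ ^ (p + 1)

/-- The action `S_{ω,μ}(φ) = (1/4)‖∂ₓφ‖²_{L²} − (μ/2)|φ(0)|² + (ω/2)‖φ‖²_{L²}
− (1/(p+1))‖φ‖^{p+1}_{L^{p+1}}`. -/
noncomputable def Sfun (p ω μ : ℝ) (φ : H1) : ℝ :=
  (1/4) * gradSq φ - (μ/2) * ‖φ.toFun 0‖ ^ 2 + (ω/2) * massSq φ - (1/(p+1)) * lpPow p φ

/-- The virial functional `P_μ(φ) = (1/2)‖∂ₓφ‖²_{L²} − (μ/2)|φ(0)|²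
− ((p−1)/(2(p+1)))‖φ‖^{p+1}_{L^{p+1}}`. -/
noncomputable def Pfun (p μ : ℝ) (φ : H1) : ℝ :=
  (1/2) * gradSq φ - (μ/2) * ‖φ.toFun 0‖ ^ 2 - ((p-1)/(2*(p+1))) * lpPow p φ

/-- The Nehari functional `I_{ω,γ}(φ) = (1/2)‖∂ₓφ‖²_{L²} − γ|φ(0)|² + ω‖φ‖²_{L²}
− ‖φ‖^{p+1}_{L^{p+1}}`. -/
noncomputable def Ifun (p ω γ : ℝ) (φ : H1) : ℝ :=
  (1/2) * gradSq φ - γ * ‖φ.toFun 0‖ ^ 2 + ω * massSq φ - lpPow p φ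

/-- `K^{α,β}_{ω,γ}`. -/
noncomputable def Kfun (p ω γ α β : ℝ) (φ : H1) : ℝ :=
  ((2*α-β)/4) * gradSq φ + (ω*(2*α+β)/2) * massSq φ - γ*α*‖φ.toFun 0‖ ^ 2
    - (((p+1)*α+β)/(p+1)) * lpPow p φ

/-- `J^{α,β}_{ω,γ}(φ) = S_{ω,γ}(φ) − K^{α,β}_{ω,γ}(φ)/μ̄` with `μ̄ = max(2α−β, 2α+β)`. -/
noncomputable def Jfun (p ω γ α β : ℝ) (φ : H1) : ℝ :=
  Sfun p ω γ φ - Kfun p ω γ α β φ / max (2*α-β) (2*α+β)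

/-- The mass `M(φ) = (1/2)‖φ‖²_{L²}`. -/
noncomputable def Mfun (φ : H1) : ℝ := (1/2) * massSq φ

/-- The energy `E_μ(φ) = (1/4)‖∂ₓφ‖²_{L²} − (μ/2)|φ(0)|² − (1/(p+1))‖φ‖^{p+1}_{L^{p+1}}`. -/
noncomputable def Efun (p μ : ℝ) (φ : H1) : ℝ :=
  (1/4) * gradSq φ - (μ/2) * ‖φ.toFun 0‖ ^ 2 - (1/(p+1)) * lpPow p φ

/-- `n_ω`: infimum of `S_{ω,γ}` over nonzero `H¹(ℝ)` functions with `P_γ = 0`. -/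
noncomputable def nOmega (p γ ω : ℝ) : ℝ :=
  sInf {s : ℝ | ∃ φ : H1, φ.toFun ≠ 0 ∧ Pfun p γ φ = 0 ∧ Sfun p ω γ φ = s}

/-- `r_ω`: infimum of `S_{ω,γ}` over nonzero even `H¹(ℝ)` functions with `P_γ = 0`. -/
noncomputable def rOmega (p γ ω : ℝ) : ℝ :=
  sInf {s : ℝ | ∃ φ : H1, φ.toFun ≠ 0 ∧ (∀ x, φ.toFun (-x) = φ.toFun x) ∧
    Pfun p γ φ = 0 ∧ Sfun p ω γ φ = s}

/-- `l_ω`: infimum of `S_{ω,0}` over nonzero `H¹(ℝ)` functions with `P_0 = 0`. -/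
noncomputable def lOmega (p ω : ℝ) : ℝ :=
  sInf {s : ℝ | ∃ φ : H1, φ.toFun ≠ 0 ∧ Pfun p 0 φ = 0 ∧ Sfun p ω 0 φ = s}

/-- The inverse hyperbolic tangent. -/
noncomputable def artanh (x : ℝ) : ℝ := (1/2) * Real.log ((1+x)/(1-x))

/-- The standing-wave profile
`Q_{ω,γ}(x) = ( ((p+1)ω/2)·sech²( ((p−1)√ω/√2)|x| + artanh(γ/√(2ω)) ) )^{1/(p−1)}`. -/
noncomputable def Qsol (p γ ω : ℝ) : ℝ → ℝ := fun x =>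
  (((p+1)*ω/2) *
    (1 / Real.cosh (((p-1)*Real.sqrt ω/Real.sqrt 2) * |x| + _root_.artanh (γ / Real.sqrt (2*ω)))) ^ 2)
  ^ (1/(p-1))

/-- The free ground state `Q_{1,0}(x) = ( ((p+1)/2)·sech²( ((p−1)/√2)x ) )^{1/(p−1)}`. -/
noncomputable def Qfree (p : ℝ) : ℝ → ℝ := fun x =>
  (((p+1)/2) * (1 / Real.cosh (((p-1)/Real.sqrt 2) * x)) ^ 2) ^ (1/(p-1))

/-- `‖φ‖²_𝓗 = (1/4)‖∂ₓφ‖²_{L²} + (ω/2)‖φ‖²_{L²} − (γ/2)|φ(0)|²`. -/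
noncomputable def HnormSq (ω γ : ℝ) (φ : H1) : ℝ :=
  (1/4) * gradSq φ + (ω/2) * massSq φ - (γ/2) * ‖φ.toFun 0‖ ^ 2


section AuxProofs

open Set

lemma gradSq_nonneg (φ : H1) : 0 ≤ gradSq φ := integral_nonneg fun x => by positivity

lemma massSq_nonneg (φ : H1) : 0 ≤ massSq φ := integral_nonneg fun x => by positivity

lemma lpPow_nonneg (p : ℝ) (φ : H1) : 0 ≤ lpPow p φ := integral_nonneg fun x => by positivity

lemma H1.integrable_sq_dx (φ : H1) : Integrable (fun x => ‖φ.dx x‖^2) volume :=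
  (memLp_two_iff_integrable_sq_norm φ.dx_memL2.aestronglyMeasurable).mp φ.dx_memL2

lemma H1.integrable_sq (φ : H1) : Integrable (fun x => ‖φ.toFun x‖^2) volume :=
  (memLp_two_iff_integrable_sq_norm φ.memL2.aestronglyMeasurable).mp φ.memL2

lemma H1.intervalIntegrable_dx (φ : H1) (u v : ℝ) : IntervalIntegrable φ.dx volume u v := by
  rw [intervalIntegrable_iff]
  haveI : IsFiniteMeasure ((volume : Measure ℝ).restrict (Set.uIoc u v)) := by
    constructor
    rw [Measure.restrict_apply_univ, Set.uIoc]
    exact measure_Ioc_lt_top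
  exact memLp_one_iff_integrable.mp ((φ.dx_memL2.restrict _).mono_exponent (by norm_num))

lemma gradSq_pos {φ : H1} (h : φ.toFun ≠ 0) : 0 < gradSq φ := by
  rcases (gradSq_nonneg φ).lt_or_eq with h' | h'
  · exact h'
  exfalso
  have h0 : (fun x => ‖φ.dx x‖^2) =ᵐ[volume] 0 :=
    (integral_eq_zero_iff_of_nonneg (fun x => by positivity) φ.integrable_sq_dx).mp h'.symm
  have hdx : φ.dx =ᵐ[volume] (0 : ℝ → ℂ) := by
    filter_upwards [h0] with x hx
    have hx' : ‖φ.dx x‖^2 = 0 := hx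
    exact norm_eq_zero.mp (sq_eq_zero_iff.mp hx')
  have hconst : φ.toFun = fun _ => φ.toFun 0 := by
    funext x
    rw [φ.eq_int x]
    have hz : ∫ t in (0:ℝ)..x, φ.dx t = ∫ t in (0:ℝ)..x, (0:ℂ) := by
      apply intervalIntegral.integral_congr_ae
      filter_upwards [hdx] with t ht _
      exact ht
    simp [hz]
  have hm := φ.memL2
  rw [hconst] at hm
  rcases (memLp_const_iff (by norm_num) (by norm_num)).mp hm with hc | hc
  · exact h (by rw [hconst, hc]; rfl)
  · rw [Real.volume_univ] at hc; exact (lt_irrefl _ hc)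

noncomputable def H1.smulH (l : ℝ) (φ : H1) : H1 where
  toFun := fun x => (l:ℂ) * φ.toFun x
  dx := fun x => (l:ℂ) * φ.dx x
  memL2 := φ.memL2.const_mul _
  dx_memL2 := φ.dx_memL2.const_mul _
  eq_int := fun x => by
    rw [intervalIntegral.integral_const_mul, ← mul_add, ← φ.eq_int]

lemma smulH_toFun_apply (l : ℝ) (φ : H1) (x : ℝ) :
    (H1.smulH l φ).toFun x = (l:ℂ) * φ.toFun x := rfl

lemma smulH_toFun_ne_zero {l : ℝ} (hl : l ≠ 0) {φ : H1} (h : φ.toFun ≠ 0) :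
    (H1.smulH l φ).toFun ≠ 0 := by
  intro hc
  apply h
  funext x
  have hx := congrFun hc x
  rw [smulH_toFun_apply] at hx
  have hx' : (l:ℂ) * φ.toFun x = 0 := hx
  rcases mul_eq_zero.mp hx' with h1 | h1
  · exact absurd (Complex.ofReal_eq_zero.mp h1) hl
  · exact h1

lemma norm_sq_smul (l : ℝ) (z : ℂ) : ‖(l:ℂ) * z‖^2 = l^2 * ‖z‖^2 := by
  rw [norm_mul, Complex.norm_real, Real.norm_eq_abs, mul_pow, sq_abs]

lemma gradSq_smulH (l : ℝ) (φ : H1) : gradSq (H1.smulH l φ) = l^2 * gradSq φ := by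
  show (∫ x : ℝ, ‖(l:ℂ) * φ.dx x‖^2) = _
  simp_rw [norm_sq_smul]
  exact integral_const_mul _ _

lemma massSq_smulH (l : ℝ) (φ : H1) : massSq (H1.smulH l φ) = l^2 * massSq φ := by
  show (∫ x : ℝ, ‖(l:ℂ) * φ.toFun x‖^2) = _
  simp_rw [norm_sq_smul]
  exact integral_const_mul _ _

lemma lpPow_smulH {l : ℝ} (hl : 0 ≤ l) (p : ℝ) (φ : H1) :
    lpPow p (H1.smulH l φ) = l^(p+1) * lpPow p φ := by
  show (∫ x : ℝ, ‖(l:ℂ) * φ.toFun x‖^(p+1)) = _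
  have h : ∀ x : ℝ, ‖(l:ℂ) * φ.toFun x‖^(p+1) = l^(p+1) * ‖φ.toFun x‖^(p+1) := by
    intro x
    rw [norm_mul, Complex.norm_real, Real.norm_eq_abs, abs_of_nonneg hl,
      Real.mul_rpow hl (norm_nonneg _)]
  simp_rw [h]
  exact integral_const_mul _ _

noncomputable def H1.shiftH (a : ℝ) (φ : H1) : H1 where
  toFun := fun x => φ.toFun (x + a)
  dx := fun x => φ.dx (x + a)
  memL2 := φ.memL2.comp_measurePreserving (measurePreserving_add_right volume a)
  dx_memL2 := φ.dx_memL2.comp_measurePreserving (measurePreserving_add_right volume a)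
  eq_int := fun x => by
    have h1 := φ.eq_int (x + a)
    have h2 := φ.eq_int (0 + a)
    have h3 : ∫ t in (0:ℝ)..x, φ.dx (t + a) = ∫ t in (0+a:ℝ)..(x+a), φ.dx t := by
      simpa using intervalIntegral.integral_comp_add_right (a := (0:ℝ)) (b := x) φ.dx a
    have h4 : (∫ t in (0:ℝ)..(0+a), φ.dx t) + ∫ t in (0+a:ℝ)..(x+a), φ.dx t
        = ∫ t in (0:ℝ)..(x+a), φ.dx t :=
      intervalIntegral.integral_add_adjacent_intervals (φ.intervalIntegrable_dx _ _)
        (φ.intervalIntegrable_dx _ _)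
    show φ.toFun (x+a) = φ.toFun (0+a) + ∫ t in (0:ℝ)..x, φ.dx (t+a)
    rw [h3, h1, h2, ← h4]
    ring

lemma shiftH_toFun_zero (a : ℝ) (φ : H1) : (H1.shiftH a φ).toFun 0 = φ.toFun a := by
  show φ.toFun (0 + a) = φ.toFun a
  rw [zero_add]

lemma shiftH_toFun_ne_zero {φ : H1} (h : φ.toFun ≠ 0) (a : ℝ) :
    (H1.shiftH a φ).toFun ≠ 0 := by
  rw [Function.ne_iff] at h ⊢
  obtain ⟨x, hx⟩ := h
  refine ⟨x - a, ?_⟩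
  show φ.toFun (x - a + a) ≠ 0
  rw [sub_add_cancel]
  exact hx

lemma gradSq_shiftH (a : ℝ) (φ : H1) : gradSq (H1.shiftH a φ) = gradSq φ := by
  show (∫ x : ℝ, ‖φ.dx (x + a)‖^2) = ∫ x : ℝ, ‖φ.dx x‖^2
  exact integral_add_right_eq_self (fun x => ‖φ.dx x‖^2) a

lemma massSq_shiftH (a : ℝ) (φ : H1) : massSq (H1.shiftH a φ) = massSq φ := by
  show (∫ x : ℝ, ‖φ.toFun (x + a)‖^2) = ∫ x : ℝ, ‖φ.toFun x‖^2
  exact integral_add_right_eq_self (fun x => ‖φ.toFun x‖^2) a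

lemma lpPow_shiftH (p : ℝ) (a : ℝ) (φ : H1) : lpPow p (H1.shiftH a φ) = lpPow p φ := by
  show (∫ x : ℝ, ‖φ.toFun (x + a)‖^(p+1)) = ∫ x : ℝ, ‖φ.toFun x‖^(p+1)
  exact integral_add_right_eq_self (fun x => ‖φ.toFun x‖^(p+1)) a

lemma Pfun_smulH (p μ : ℝ) {l : ℝ} (hl : 0 ≤ l) (φ : H1) :
    Pfun p μ (H1.smulH l φ) =
      l^2 * ((1/2) * gradSq φ - (μ/2) * ‖φ.toFun 0‖^2)
        - l^(p+1) * (((p-1)/(2*(p+1))) * lpPow p φ) := by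
  rw [Pfun, gradSq_smulH, lpPow_smulH hl, smulH_toFun_apply, norm_sq_smul]
  ring

lemma Sfun_smulH (p ω μ : ℝ) {l : ℝ} (hl : 0 ≤ l) (φ : H1) :
    Sfun p ω μ (H1.smulH l φ) =
      l^2 * ((1/4) * gradSq φ - (μ/2) * ‖φ.toFun 0‖^2 + (ω/2) * massSq φ)
        - l^(p+1) * ((1/(p+1)) * lpPow p φ) := by
  rw [Sfun, gradSq_smulH, massSq_smulH, lpPow_smulH hl, smulH_toFun_apply, norm_sq_smul]
  ring

lemma Sfun_nonneg_of_P {p ω μ : ℝ} (hp : 5 < p) (hω : 0 < ω) (hμ : μ ≤ 0) (φ : H1)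
    (hP : Pfun p μ φ = 0) : 0 ≤ Sfun p ω μ φ := by
  have hp1 : (0:ℝ) < p + 1 := by linarith
  have key : Sfun p ω μ φ = (1/2) * Pfun p μ φ + (-(μ/4)) * ‖φ.toFun 0‖^2
      + (ω/2) * massSq φ + ((p-5)/(4*(p+1))) * lpPow p φ := by
    rw [Sfun, Pfun]
    field_simp
    ring
  rw [key, hP]
  have h1 : 0 ≤ (-(μ/4)) * ‖φ.toFun 0‖^2 := mul_nonneg (by linarith) (by positivity)
  have h2 : 0 ≤ (ω/2) * massSq φ := mul_nonneg (by linarith) (massSq_nonneg φ)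
  have h3 : 0 ≤ ((p-5)/(4*(p+1))) * lpPow p φ :=
    mul_nonneg (div_nonneg (by linarith) (by linarith)) (lpPow_nonneg p φ)
  linarith

lemma rpow_peel {l : ℝ} (hl : 0 < l) (p : ℝ) : l ^ (p+1) = l^2 * l^(p-1) := by
  have h : p + 1 = 2 + (p - 1) := by ring
  rw [h, Real.rpow_add hl, Real.rpow_two]

lemma rpow_inv_self {t : ℝ} (ht : 0 ≤ t) {p : ℝ} (hp : p - 1 ≠ 0) :
    (t ^ (1/(p-1))) ^ (p-1) = t := by
  rw [← Real.rpow_mul ht, one_div_mul_cancel hp, Real.rpow_one]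

/-- Scale a function by `t^(1/(p-1))` to land on the constraint `P_μ = 0`. -/
lemma scale_S (p μ ω t : ℝ) (hp : 5 < p) (φ : H1) (hφ : φ.toFun ≠ 0) (ht : 0 < t)
    (hteq : t * (((p-1)/(2*(p+1))) * lpPow p φ)
      = (1/2)*gradSq φ - (μ/2)*‖φ.toFun 0‖^2) :
    ∃ ψ : H1, ψ.toFun ≠ 0 ∧ Pfun p μ ψ = 0 ∧
      Sfun p ω μ ψ
        = (t^(1/(p-1)))^2 * ((1/4)*gradSq φ - (μ/2)*‖φ.toFun 0‖^2 + (ω/2)*massSq φ)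
          - (t^(1/(p-1)))^2 * t * ((1/(p+1)) * lpPow p φ) := by
  have hlpos : 0 < t ^ (1/(p-1)) := Real.rpow_pos_of_pos ht _
  have hlp : (t ^ (1/(p-1))) ^ (p-1) = t := rpow_inv_self ht.le (by linarith)
  refine ⟨H1.smulH (t ^ (1/(p-1))) φ, smulH_toFun_ne_zero hlpos.ne' hφ, ?_, ?_⟩
  · rw [Pfun_smulH p μ hlpos.le φ, rpow_peel hlpos, hlp, ← hteq]
    ring
  · rw [Sfun_smulH p ω μ hlpos.le φ, rpow_peel hlpos, hlp]

lemma exists_P_zero (p : ℝ) (hp : 5 < p) {μ : ℝ} (hμ : μ ≤ 0) (ω : ℝ) (φ : H1)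
    (hφ : φ.toFun ≠ 0) (hL : 0 < lpPow p φ) :
    ∃ ψ : H1, ψ.toFun ≠ 0 ∧ Pfun p μ ψ = 0 := by
  have hp1 : (0:ℝ) < p + 1 := by linarith
  have hp_1 : (0:ℝ) < p - 1 := by linarith
  have hCpos : 0 < ((p-1)/(2*(p+1))) * lpPow p φ :=
    mul_pos (div_pos hp_1 (by linarith)) hL
  have hApos : 0 < (1/2)*gradSq φ - (μ/2)*‖φ.toFun 0‖^2 := by
    have h1 := gradSq_pos hφ
    have h2 : 0 ≤ -(μ/2) * ‖φ.toFun 0‖^2 := mul_nonneg (by linarith) (by positivity)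
    nlinarith
  set t := ((1/2)*gradSq φ - (μ/2)*‖φ.toFun 0‖^2) / (((p-1)/(2*(p+1))) * lpPow p φ) with htd
  have ht : 0 < t := div_pos hApos hCpos
  have hteq : t * (((p-1)/(2*(p+1))) * lpPow p φ)
      = (1/2)*gradSq φ - (μ/2)*‖φ.toFun 0‖^2 := by
    rw [htd, div_mul_cancel₀ _ hCpos.ne']
  obtain ⟨ψ, h1, h2, _⟩ := scale_S p μ ω t hp φ hφ ht hteq
  exact ⟨ψ, h1, h2⟩

noncomputable def gaussH1 : H1 where
  toFun := fun x => ((Real.exp (-x^2) : ℝ) : ℂ)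
  dx := fun x => ((-(2*x) * Real.exp (-x^2) : ℝ) : ℂ)
  memL2 := by
    have hc : Continuous fun x : ℝ => ((Real.exp (-x^2) : ℝ) : ℂ) :=
      Complex.continuous_ofReal.comp (Real.continuous_exp.comp (continuous_pow 2).neg)
    refine (memLp_two_iff_integrable_sq_norm hc.aestronglyMeasurable).mpr ?_
    have heq : (fun x : ℝ => ‖((Real.exp (-x^2):ℝ):ℂ)‖^2)
        = fun x : ℝ => Real.exp (-(2:ℝ) * x^2) := by
      funext x
      rw [Complex.norm_real, Real.norm_eq_abs, abs_of_pos (Real.exp_pos _), sq, ← Real.exp_add]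
      ring_nf
    rw [heq]
    exact integrable_exp_neg_mul_sq (by norm_num)
  dx_memL2 := by
    have hc : Continuous fun x : ℝ => ((-(2*x) * Real.exp (-x^2) : ℝ) : ℂ) :=
      Complex.continuous_ofReal.comp
        (((continuous_const.mul continuous_id).neg).mul
          (Real.continuous_exp.comp (continuous_pow 2).neg))
    refine (memLp_two_iff_integrable_sq_norm hc.aestronglyMeasurable).mpr ?_
    have heq : (fun x : ℝ => ‖((-(2*x)*Real.exp (-x^2):ℝ):ℂ)‖^2)
        = fun x : ℝ => 4 * (x^2 * Real.exp (-(2:ℝ) * x^2)) := by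
      funext x
      have he : Real.exp (-x^2) ^ 2 = Real.exp (-(2:ℝ)*x^2) := by
        rw [sq, ← Real.exp_add]; ring_nf
      rw [Complex.norm_real, Real.norm_eq_abs, sq_abs, mul_pow, he]
      ring
    rw [heq]
    have hint := integrable_rpow_mul_exp_neg_mul_sq (by norm_num : (0:ℝ) < 2)
      (by norm_num : (-1:ℝ) < 2)
    have h2 : (fun x : ℝ => x ^ (2:ℝ) * Real.exp (-(2:ℝ)*x^2))
        = fun x : ℝ => x^2 * Real.exp (-(2:ℝ)*x^2) := by
      funext x; rw [Real.rpow_two]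
    rw [h2] at hint
    exact hint.const_mul 4
  eq_int := by
    intro x
    have hderiv : ∀ t ∈ Set.uIcc (0:ℝ) x,
        HasDerivAt (fun t : ℝ => Real.exp (-t^2)) (-(2*t) * Real.exp (-t^2)) t := by
      intro t _
      have h1 : HasDerivAt (fun t : ℝ => -t^2) (-(2*t)) t := by
        simpa using (hasDerivAt_pow 2 t).fun_neg
      simpa [Function.comp_def, mul_comm] using (Real.hasDerivAt_exp (-t^2)).comp t h1
    have hcont : Continuous fun t : ℝ => -(2*t) * Real.exp (-t^2) := by
      exact ((continuous_const.mul continuous_id).neg).mul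
        (Real.continuous_exp.comp (continuous_pow 2).neg)
    have hreal : ∫ t in (0:ℝ)..x, -(2*t) * Real.exp (-t^2)
        = Real.exp (-x^2) - Real.exp (-(0:ℝ)^2) :=
      intervalIntegral.integral_eq_sub_of_hasDerivAt hderiv (hcont.intervalIntegrable _ _)
    show ((Real.exp (-x^2):ℝ):ℂ)
        = ((Real.exp (-(0:ℝ)^2):ℝ):ℂ) + ∫ t in (0:ℝ)..x, ((-(2*t)*Real.exp (-t^2):ℝ):ℂ)
    rw [intervalIntegral.integral_ofReal, hreal]
    push_cast
    ring

lemma gaussH1_ne : gaussH1.toFun ≠ 0 := by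
  intro h
  have h0 : ((Real.exp (-(0:ℝ)^2):ℝ):ℂ) = 0 := congrFun h 0
  rw [Complex.ofReal_eq_zero] at h0
  exact Real.exp_ne_zero _ h0

lemma gaussH1_lp_pos (p : ℝ) (hp : 5 < p) : 0 < lpPow p gaussH1 := by
  have heq : (fun x : ℝ => ‖gaussH1.toFun x‖ ^ (p+1))
      = fun x : ℝ => Real.exp (-(p+1) * x^2) := by
    funext x
    show ‖((Real.exp (-x^2):ℝ):ℂ)‖ ^ (p+1) = _
    rw [Complex.norm_real, Real.norm_eq_abs, abs_of_pos (Real.exp_pos _), ← Real.exp_mul]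
    ring_nf
  show 0 < ∫ x : ℝ, ‖gaussH1.toFun x‖ ^ (p+1)
  rw [heq, integral_gaussian]
  exact Real.sqrt_pos.mpr (div_pos Real.pi_pos (by linarith))

lemma exists_small_val (φ : H1) {δ : ℝ} (hδ : 0 < δ) : ∃ a : ℝ, ‖φ.toFun a‖^2 < δ := by
  by_contra h
  push_neg at h
  have hint : Integrable (fun _ : ℝ => δ) (volume : Measure ℝ) := by
    refine φ.integrable_sq.mono' aestronglyMeasurable_const ?_
    filter_upwards with x
    rw [Real.norm_eq_abs, abs_of_pos hδ]
    exact h x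
  rw [integrable_const_iff] at hint
  rcases hint with h' | h'
  · exact hδ.ne' h'
  · have h' := h'.measure_univ_lt_top; rw [Real.volume_univ] at h'
    exact lt_irrefl _ h'

set_option maxHeartbeats 1600000 in
/-- Purely numerical key inequality for direction `l ≤ n`. -/
lemma key_ineq (p γ ω G M B L t : ℝ) (hp : 5 < p) (hγ : γ < 0) (hω : 0 < ω)
    (hG : 0 < G) (hM : 0 ≤ M) (hB : 0 ≤ B) (hL : 0 < L)
    (hC : (p-1)/(2*(p+1)) * L = (1/2)*G - (γ/2)*B)
    (htd : t = ((1/2)*G)/((p-1)/(2*(p+1))*L)) :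
    (t^(1/(p-1)))^2 * ((1/4)*G - ((0:ℝ)/2)*B + (ω/2)*M)
        - (t^(1/(p-1)))^2 * t * ((1/(p+1))*L)
      ≤ (1/4)*G - (γ/2)*B + (ω/2)*M - (1/(p+1))*L := by
  have hp1 : (0:ℝ) < p + 1 := by linarith
  have hp_1 : (0:ℝ) < p - 1 := by linarith
  have hγB : 0 ≤ -γ * B := mul_nonneg (by linarith) hB
  have hCpos : 0 < (p-1)/(2*(p+1))*L := mul_pos (div_pos hp_1 (by linarith)) hL
  have ht : 0 < t := by
    rw [htd]
    exact div_pos (by linarith) hCpos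
  have ht1 : t ≤ 1 := by
    rw [htd, div_le_one hCpos, hC]
    linarith
  have hl0 : 0 < t^(1/(p-1)) := Real.rpow_pos_of_pos ht _
  have hl1 : t^(1/(p-1)) ≤ 1 := Real.rpow_le_one ht.le ht1 (by positivity)
  have hl2 : (t^(1/(p-1)))^2 ≤ 1 := by nlinarith
  have hkey : t * ((1/(p+1))*L) = (1/(p-1))*G := by
    rw [htd]
    field_simp
  have hmid : (t^(1/(p-1)))^2 * t * ((1/(p+1))*L)
      = (t^(1/(p-1)))^2 * ((1/(p-1))*G) := by
    rw [mul_assoc, hkey]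
  rw [hmid]
  have hLv : (1/(p+1))*L = (G - γ*B)/(p-1) := by
    field_simp at hC ⊢
    linarith
  rw [hLv]
  have hW : (t^(1/(p-1)))^2*((1/4)*G - ((0:ℝ)/2)*B + (ω/2)*M)
        - (t^(1/(p-1)))^2*((1/(p-1))*G)
      = (t^(1/(p-1)))^2 * (((p-5)/(4*(p-1)))*G + (ω/2)*M) := by
    field_simp
    ring
  have hRHS : (1/4)*G - (γ/2)*B + (ω/2)*M - (G - γ*B)/(p-1)
      = (((p-5)/(4*(p-1)))*G + (ω/2)*M) + (γ*(3-p)/(2*(p-1)))*B := by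
    field_simp
    ring
  rw [hW, hRHS]
  have hWnn : 0 ≤ ((p-5)/(4*(p-1)))*G + (ω/2)*M :=
    add_nonneg (mul_nonneg (div_nonneg (by linarith) (by linarith)) hG.le)
      (mul_nonneg (by linarith) hM)
  have hlast : 0 ≤ (γ*(3-p)/(2*(p-1)))*B := by
    apply mul_nonneg _ hB
    apply div_nonneg _ (by linarith)
    nlinarith
  nlinarith [mul_nonneg (by nlinarith : (0:ℝ) ≤ 1 - (t^(1/(p-1)))^2) hWnn]

/-- Direction `l ≤ n`: from a `P_γ = 0` function produce a `P_0 = 0` function with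
smaller `S_{ω,0}`. -/
lemma aux_dir2 (p γ ω : ℝ) (hp : 5 < p) (hγ : γ < 0) (hω : 0 < ω) (φ : H1)
    (hφ0 : φ.toFun ≠ 0) (hP : Pfun p γ φ = 0) :
    ∃ ψ : H1, ψ.toFun ≠ 0 ∧ Pfun p 0 ψ = 0 ∧ Sfun p ω 0 ψ ≤ Sfun p ω γ φ := by
  have hp1 : (0:ℝ) < p + 1 := by linarith
  have hp_1 : (0:ℝ) < p - 1 := by linarith
  have hG := gradSq_pos hφ0
  have hBnn : (0:ℝ) ≤ ‖φ.toFun 0‖^2 := by positivity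
  have hγB : 0 ≤ -(γ/2) * ‖φ.toFun 0‖^2 := mul_nonneg (by linarith) hBnn
  rw [Pfun] at hP
  have hCval : ((p-1)/(2*(p+1))) * lpPow p φ
      = (1/2)*gradSq φ - (γ/2)*‖φ.toFun 0‖^2 := by linarith
  have hCpos : 0 < ((p-1)/(2*(p+1))) * lpPow p φ := by nlinarith
  have hLpos : 0 < lpPow p φ := by
    rcases lt_or_ge 0 (lpPow p φ) with h | h
    · exact h
    · exfalso
      have : ((p-1)/(2*(p+1))) * lpPow p φ ≤ 0 :=
        mul_nonpos_of_nonneg_of_nonpos (le_of_lt (div_pos hp_1 (by linarith))) h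
      linarith
  set t := ((1/2)*gradSq φ) / (((p-1)/(2*(p+1))) * lpPow p φ) with htd
  have ht : 0 < t := div_pos (by linarith) hCpos
  have hteq : t * (((p-1)/(2*(p+1))) * lpPow p φ)
      = (1/2)*gradSq φ - ((0:ℝ)/2)*‖φ.toFun 0‖^2 := by
    rw [htd, div_mul_cancel₀ _ hCpos.ne']
    ring
  obtain ⟨ψ, hψ0, hψP, hψS⟩ := scale_S p 0 ω t hp φ hφ0 ht hteq
  refine ⟨ψ, hψ0, hψP, ?_⟩
  rw [hψS]
  exact key_ineq p γ ω (gradSq φ) (massSq φ) (‖φ.toFun 0‖^2) (lpPow p φ) t hp hγ hω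
    hG (massSq_nonneg φ) hBnn hLpos hCval htd

/-- Direction `n ≤ l`: from a `P_0 = 0` function produce a `P_γ = 0` function with
`S_{ω,γ}` at most `S_{ω,0} + ε`. -/
lemma aux_dir1 (p γ ω : ℝ) (hp : 5 < p) (hγ : γ < 0) (hω : 0 < ω) (φ : H1)
    (hφ0 : φ.toFun ≠ 0) (hP : Pfun p 0 φ = 0) {ε : ℝ} (hε : 0 < ε) :
    ∃ ψ : H1, ψ.toFun ≠ 0 ∧ Pfun p γ ψ = 0 ∧ Sfun p ω γ ψ ≤ Sfun p ω 0 φ + ε := by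
  have hp1 : (0:ℝ) < p + 1 := by linarith
  have hp_1 : (0:ℝ) < p - 1 := by linarith
  have hG := gradSq_pos hφ0
  rw [Pfun] at hP
  have hCval : ((p-1)/(2*(p+1))) * lpPow p φ = (1/2)*gradSq φ := by
    have h0 : ((0:ℝ)/2)*‖φ.toFun 0‖^2 = 0 := by ring
    linarith [hP, h0]
  have hCpos : 0 < ((p-1)/(2*(p+1))) * lpPow p φ := by rw [hCval]; linarith
  set C := ((p-1)/(2*(p+1))) * lpPow p φ with hCd
  set F : ℝ → ℝ := fun b =>
    (((((1/2)*gradSq φ - (γ/2)*b)/C) ^ (1/(p-1)))^2)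
        * ((1/4)*gradSq φ - (γ/2)*b + (ω/2)*massSq φ)
      - (((((1/2)*gradSq φ - (γ/2)*b)/C) ^ (1/(p-1)))^2)
        * ((((1/2)*gradSq φ - (γ/2)*b)/C)) * ((1/(p+1)) * lpPow p φ) with hFd
  have hT0 : (((1/2)*gradSq φ - (γ/2)*(0:ℝ))/C) = 1 := by
    rw [mul_zero, sub_zero, hCval, div_self (by linarith : (1:ℝ)/2*gradSq φ ≠ 0)]
  have hF0 : F 0 = Sfun p ω 0 φ := by
    rw [hFd]
    simp only
    rw [hT0, Real.one_rpow, one_pow, Sfun]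
    ring
  have hcont : ContinuousAt F 0 := by
    have hTc : ContinuousAt (fun b : ℝ => ((1/2)*gradSq φ - (γ/2)*b)/C) 0 :=
      ((continuous_const.sub (continuous_const.mul continuous_id)).div_const C).continuousAt
    have hlamc : ContinuousAt
        (fun b : ℝ => (((1/2)*gradSq φ - (γ/2)*b)/C) ^ (1/(p-1))) 0 :=
      hTc.rpow_const (Or.inl (by rw [hT0]; norm_num))
    have hXc : ContinuousAt (fun b : ℝ => (1/4)*gradSq φ - (γ/2)*b + (ω/2)*massSq φ) 0 :=
      ((continuous_const.sub (continuous_const.mul continuous_id)).add continuous_const).continuousAt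
    rw [hFd]
    exact ((hlamc.pow 2).mul hXc).sub
      (((hlamc.pow 2).mul hTc).mul continuousAt_const)
  obtain ⟨δ, hδpos, hδ⟩ := Metric.continuousAt_iff.mp hcont ε hε
  obtain ⟨a, ha⟩ := exists_small_val φ hδpos
  have hbnn : (0:ℝ) ≤ ‖φ.toFun a‖^2 := by positivity
  have hdistb : dist (‖φ.toFun a‖^2) 0 < δ := by
    rw [Real.dist_eq, sub_zero, abs_of_nonneg hbnn]
    exact ha
  have hFb := hδ hdistb
  rw [Real.dist_eq] at hFb
  have hFb' : F (‖φ.toFun a‖^2) ≤ F 0 + ε := by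
    have := abs_lt.mp hFb
    linarith [this.1, this.2]
  -- Now build the actual element from the shifted function
  set b := ‖φ.toFun a‖^2 with hbd
  set t := (((1/2)*gradSq φ - (γ/2)*b)/C) with htd
  have hAb : 0 < (1/2)*gradSq φ - (γ/2)*b := by
    have : 0 ≤ -(γ/2) * b := mul_nonneg (by linarith) hbnn
    nlinarith
  have ht : 0 < t := div_pos hAb hCpos
  have hteq : t * (((p-1)/(2*(p+1))) * lpPow p (H1.shiftH a φ))
      = (1/2)*gradSq (H1.shiftH a φ) - (γ/2)*‖(H1.shiftH a φ).toFun 0‖^2 := by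
    rw [lpPow_shiftH, gradSq_shiftH, shiftH_toFun_zero, ← hCd, ← hbd, htd,
      div_mul_cancel₀ _ hCpos.ne']
  obtain ⟨ψ, hψ0, hψP, hψS⟩ :=
    scale_S p γ ω t hp (H1.shiftH a φ) (shiftH_toFun_ne_zero hφ0 a) ht hteq
  refine ⟨ψ, hψ0, hψP, ?_⟩
  rw [gradSq_shiftH, massSq_shiftH, lpPow_shiftH, shiftH_toFun_zero, ← hbd] at hψS
  have hSF : Sfun p ω γ ψ = F b := by
    rw [hψS, hFd]
  rw [hSF, ← hF0]
  exact hFb'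

end AuxProofs

/-- For `p > 5`, `γ < 0`, `ω > 0`, one has `n_ω = l_ω`. -/
theorem nOmega_eq_lOmega (p γ ω : ℝ) (hp : 5 < p) (hγ : γ < 0) (hω : 0 < ω) :
    nOmega p γ ω = lOmega p ω := by
  rw [nOmega, lOmega]
  set N : Set ℝ := {s : ℝ | ∃ φ : H1, φ.toFun ≠ 0 ∧ Pfun p γ φ = 0 ∧ Sfun p ω γ φ = s} with hN
  set Ls : Set ℝ := {s : ℝ | ∃ φ : H1, φ.toFun ≠ 0 ∧ Pfun p 0 φ = 0 ∧ Sfun p ω 0 φ = s} with hLs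
  have hNne : N.Nonempty := by
    obtain ⟨ψ, h1, h2⟩ := exists_P_zero p hp hγ.le ω gaussH1 gaussH1_ne (gaussH1_lp_pos p hp)
    exact ⟨Sfun p ω γ ψ, ψ, h1, h2, rfl⟩
  have hLne : Ls.Nonempty := by
    obtain ⟨ψ, h1, h2⟩ := exists_P_zero p hp le_rfl ω gaussH1 gaussH1_ne (gaussH1_lp_pos p hp)
    exact ⟨Sfun p ω 0 ψ, ψ, h1, h2, rfl⟩
  have hNbdd : BddBelow N := by
    refine ⟨0, ?_⟩
    rintro s ⟨φ, h0, hP, rfl⟩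
    exact Sfun_nonneg_of_P hp hω hγ.le φ hP
  have hLbdd : BddBelow Ls := by
    refine ⟨0, ?_⟩
    rintro s ⟨φ, h0, hP, rfl⟩
    exact Sfun_nonneg_of_P hp hω le_rfl φ hP
  apply le_antisymm
  · refine le_csInf hLne ?_
    rintro s ⟨φ, hφ0, hP, rfl⟩
    refine le_of_forall_pos_le_add ?_
    intro ε hε
    obtain ⟨ψ, h1, h2, h3⟩ := aux_dir1 p γ ω hp hγ hω φ hφ0 hP hε
    calc sInf N ≤ Sfun p ω γ ψ := csInf_le hNbdd ⟨ψ, h1, h2, rfl⟩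
      _ ≤ Sfun p ω 0 φ + ε := h3
  · refine le_csInf hNne ?_
    rintro s ⟨φ, hφ0, hP, rfl⟩
    obtain ⟨ψ, h1, h2, h3⟩ := aux_dir2 p γ ω hp hγ hω φ hφ0 hP
    calc sInf Ls ≤ Sfun p ω 0 ψ := csInf_le hLbdd ⟨ψ, h1, h2, rfl⟩
      _ ≤ Sfun p ω γ φ := h3
end

section
/- Let p > 5, γ ≤ 0, ω > 0, and let (α,β) satisfy α > 0, 2α−β ≥ 0 and 2α+β ≥ 0; set μ̄ = max{2α−β, 2α+β}. Then for every φ ∈ H¹(ℝ): μ̄·J^{α,β}_{ω,γ}(φ) ≥ |β|·min{ (1/2)‖∂ₓφ‖²_{L²}, ω‖φ‖²_{L²} } − (γ|β|/2)|φ(0)|² + ((p−5)α/(p+1))‖φ‖^{p+1}_{L^{p+1}}. In particular J^{α,β}_{ω,γ}(φ) ≥ 0 for every φ ∈ H¹(ℝ). -/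
open MeasureTheory Real Filter Topology

set_option maxHeartbeats 1000000 in
/-- the lower bound `μ̄·J^{α,β}_{ω,γ}(φ) ≥ |β|·min((1/2)‖∂ₓφ‖²_{L²}, ω‖φ‖²_{L²})
− (γ|β|/2)|φ(0)|² + ((p−5)α/(p+1))‖φ‖^{p+1}_{L^{p+1}}`, and in particular `J^{α,β}_{ω,γ} ≥ 0`. -/
theorem J_lower_bound (p γ ω α β : ℝ) (hp : 5 < p) (hγ : γ ≤ 0) (hω : 0 < ω)
    (hα : 0 < α) (hβ1 : 0 ≤ 2*α - β) (hβ2 : 0 ≤ 2*α + β) :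
    (∀ φ : H1,
      |β| * min ((1/2) * gradSq φ) (ω * massSq φ) - (γ * |β| / 2) * ‖φ.toFun 0‖ ^ 2
        + ((p-5)*α/(p+1)) * lpPow p φ ≤ max (2*α-β) (2*α+β) * Jfun p ω γ α β φ) ∧
    (∀ φ : H1, 0 ≤ Jfun p ω γ α β φ) := by
  have hp1 : (0:ℝ) < p + 1 := by linarith
  have hp1' : (p:ℝ) + 1 ≠ 0 := ne_of_gt hp1
  have hmain : ∀ φ : H1,
      |β| * min ((1/2) * gradSq φ) (ω * massSq φ) - (γ * |β| / 2) * ‖φ.toFun 0‖ ^ 2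
        + ((p-5)*α/(p+1)) * lpPow p φ ≤ max (2*α-β) (2*α+β) * Jfun p ω γ α β φ := by
    intro φ
    have hg : 0 ≤ gradSq φ := integral_nonneg fun x => by positivity
    have hm : 0 ≤ massSq φ := integral_nonneg fun x => by positivity
    have hl : 0 ≤ lpPow p φ :=
      integral_nonneg fun x => Real.rpow_nonneg (norm_nonneg _) _
    have hn : (0:ℝ) ≤ ‖φ.toFun 0‖ ^ 2 := by positivity
    rcases le_total 0 β with hb | hb
    · have hmax : max (2*α-β) (2*α+β) = 2*α+β := max_eq_right (by linarith)
      have hμ : (0:ℝ) < 2*α+β := by linarith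
      have habs : |β| = β := abs_of_nonneg hb
      have hJ : (2*α+β) * Jfun p ω γ α β φ
          = (β/2) * gradSq φ - (γ*β/2) * ‖φ.toFun 0‖ ^ 2 + ((p-1)*α/(p+1)) * lpPow p φ := by
        unfold Jfun Sfun Kfun
        rw [hmax]
        field_simp
        ring
      rw [hmax, hJ, habs]
      have hmin : min ((1/2) * gradSq φ) (ω * massSq φ) ≤ (1/2) * gradSq φ := min_le_left _ _
      have h1 : β * min ((1/2) * gradSq φ) (ω * massSq φ) ≤ β * ((1/2) * gradSq φ) :=
        mul_le_mul_of_nonneg_left hmin hb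
      have h2 : ((p-5)*α/(p+1)) * lpPow p φ ≤ ((p-1)*α/(p+1)) * lpPow p φ := by
        apply mul_le_mul_of_nonneg_right _ hl
        apply div_le_div_of_nonneg_right _ hp1.le
        nlinarith
      nlinarith
    · have hmax : max (2*α-β) (2*α+β) = 2*α-β := max_eq_left (by linarith)
      have hμ : (0:ℝ) < 2*α-β := by linarith
      have habs : |β| = -β := abs_of_nonpos hb
      have hJ : (2*α-β) * Jfun p ω γ α β φ
          = (-β) * (ω * massSq φ) - (γ*(-β)/2) * ‖φ.toFun 0‖ ^ 2
            + (((p-1)*α+2*β)/(p+1)) * lpPow p φ := by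
        unfold Jfun Sfun Kfun
        rw [hmax]
        field_simp
        ring
      rw [hmax, hJ, habs]
      have hmin : min ((1/2) * gradSq φ) (ω * massSq φ) ≤ ω * massSq φ := min_le_right _ _
      have h1 : (-β) * min ((1/2) * gradSq φ) (ω * massSq φ) ≤ (-β) * (ω * massSq φ) :=
        mul_le_mul_of_nonneg_left hmin (by linarith)
      have h2 : ((p-5)*α/(p+1)) * lpPow p φ ≤ (((p-1)*α+2*β)/(p+1)) * lpPow p φ := by
        apply mul_le_mul_of_nonneg_right _ hl
        apply div_le_div_of_nonneg_right _ hp1.le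
        nlinarith
      nlinarith
  refine ⟨hmain, fun φ => ?_⟩
  have hg : 0 ≤ gradSq φ := integral_nonneg fun x => by positivity
  have hm : 0 ≤ massSq φ := integral_nonneg fun x => by positivity
  have hl : 0 ≤ lpPow p φ :=
    integral_nonneg fun x => Real.rpow_nonneg (norm_nonneg _) _
  have hn : (0:ℝ) ≤ ‖φ.toFun 0‖ ^ 2 := by positivity
  have hμ : (0:ℝ) < max (2*α-β) (2*α+β) := by
    rcases le_total 0 β with h | h
    · exact lt_max_iff.mpr (Or.inr (by linarith))
    · exact lt_max_iff.mpr (Or.inl (by linarith))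
  have habs : (0:ℝ) ≤ |β| := abs_nonneg β
  have hminn : 0 ≤ min ((1/2) * gradSq φ) (ω * massSq φ) :=
    le_min (by positivity) (by positivity)
  have h0 : 0 ≤ max (2*α-β) (2*α+β) * Jfun p ω γ α β φ := by
    refine le_trans ?_ (hmain φ)
    have h1 : 0 ≤ |β| * min ((1/2) * gradSq φ) (ω * massSq φ) := mul_nonneg habs hminn
    have h2 : 0 ≤ -(γ * |β| / 2) * ‖φ.toFun 0‖ ^ 2 := by
      apply mul_nonneg _ hn
      nlinarith [mul_nonneg (neg_nonneg.mpr hγ) (abs_nonneg β)]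
    have h3 : 0 ≤ ((p-5)*α/(p+1)) * lpPow p φ := by
      apply mul_nonneg _ hl
      apply div_nonneg _ hp1.le
      nlinarith
    nlinarith
  exact nonneg_of_mul_nonneg_left (by rwa [mul_comm] at h0) hμ
end
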